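/- (q-Chu–Vandermonde summation) For 0<q<1, n a nonnegative integer, and complex x, y with (y;q)_n ≠ 0, ∑_{k=0}^n ((q^{-n};q)_k (x;q)_k / ((q;q)_k (y;q)_k)) q^k = x^n (y/x;q)_n / (y;q)_n, where for x = 0 the right-hand side is interpreted via x^n (y/x;q)_n = ∏_{j=0}^{n-1}(x - y q^j). -/

import Mathlib

open Finset

noncomputable def qPoch (q a : ℂ) (n : ℕ) : ℂ := ∏ k ∈ Finset.range n, (1 - a * q ^ k)

noncomputable def qPochInf (q a : ℂ) : ℂ := ∏' k : ℕ, (1 - a * q ^ k)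

noncomputable def cauchyP (q x y : ℂ) (n : ℕ) : ℂ := ∏ k ∈ Finset.range n, (x - q ^ k * y)

noncomputable def qBinom (q : ℂ) (n k : ℕ) : ℂ := qPoch q q n / (qPoch q q k * qPoch q q (n - k))

noncomputable def Dq (q : ℂ) (f : ℂ → ℂ) : ℂ → ℂ := fun a => (f a - f (q * a)) / a

noncomputable def thetaq (q : ℂ) (f : ℂ → ℂ) : ℂ → ℂ := fun a => (f (a / q) - f a) / (a / q)

noncomputable def qIntegral (q : ℂ) (f : ℂ → ℂ) (c d : ℂ) : ℂ :=
  (1 - q) * ∑' n : ℕ, q ^ n * (d * f (d * q ^ n) - c * f (c * q ^ n))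

/-! ### Auxiliary lemmas -/

lemma qPoch_zero (q a : ℂ) : qPoch q a 0 = 1 := by simp [qPoch]

lemma qPoch_succ (q a : ℂ) (n : ℕ) :
    qPoch q a (n + 1) = qPoch q a n * (1 - a * q ^ n) := by
  simp [qPoch, Finset.prod_range_succ]

lemma qPoch_succ' (q a : ℂ) (n : ℕ) :
    qPoch q a (n + 1) = (1 - a) * qPoch q (a * q) n := by
  unfold qPoch
  rw [Finset.prod_range_succ']
  simp only [pow_zero, mul_one]
  rw [mul_comm]
  congr 1
  apply Finset.prod_congr rfl
  intro k _
  ring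

lemma qPoch_add (q a : ℂ) (m l : ℕ) :
    qPoch q a (m + l) = qPoch q a m * qPoch q (a * q ^ m) l := by
  unfold qPoch
  rw [Finset.prod_range_add]
  congr 1
  apply Finset.prod_congr rfl
  intro k _
  rw [pow_add]; ring

lemma qc_ne_zero (q : ℝ) (hq0 : 0 < q) : (q : ℂ) ≠ 0 := by
  exact_mod_cast hq0.ne'

lemma one_sub_qpow_ne_zero (q : ℝ) (hq0 : 0 < q) (hq1 : q < 1) (m : ℕ) :
    (1 : ℂ) - (q : ℂ) ^ (m + 1) ≠ 0 := by
  intro h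
  have h1 : ((q ^ (m + 1) : ℝ) : ℂ) = 1 := by
    push_cast
    linear_combination -h
  have h2 : q ^ (m + 1) = 1 := by exact_mod_cast h1
  have h3 : q ^ (m + 1) < 1 := pow_lt_one₀ hq0.le hq1 (Nat.succ_ne_zero m)
  linarith

lemma qPoch_qq_ne_zero (q : ℝ) (hq0 : 0 < q) (hq1 : q < 1) (k : ℕ) :
    qPoch (q : ℂ) (q : ℂ) k ≠ 0 := by
  unfold qPoch
  apply Finset.prod_ne_zero_iff.mpr
  intro j _
  have := one_sub_qpow_ne_zero q hq0 hq1 j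
  rw [pow_succ'] at this
  exact this

/-- The coefficient in the cleared-denominator q-Chu-Vandermonde sum. -/
noncomputable def Acoef (q : ℝ) (n k : ℕ) : ℂ :=
  qPoch (q : ℂ) ((q : ℂ) ^ (-(n : ℤ))) k * (q : ℂ) ^ k / qPoch (q : ℂ) (q : ℂ) k

lemma Acoef_zero (q : ℝ) (n : ℕ) : Acoef q n 0 = 1 := by
  simp [Acoef, qPoch_zero]

lemma Acoef_top (q : ℝ) (hq0 : 0 < q) (n : ℕ) : Acoef q n (n + 1) = 0 := by
  unfold Acoef qPoch
  rw [Finset.prod_eq_zero (Finset.self_mem_range_succ n)]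
  · simp
  · rw [← zpow_natCast (q : ℂ) n, ← zpow_add₀ (qc_ne_zero q hq0)]
    simp

lemma Acoef_rec (q : ℝ) (hq0 : 0 < q) (hq1 : q < 1) (n k : ℕ) :
    Acoef q (n + 1) (k + 1)
      = Acoef q n (k + 1) / (q : ℂ) ^ (k + 1) - Acoef q n k / (q : ℂ) ^ k := by
  have hQ : (q : ℂ) ≠ 0 := qc_ne_zero q hq0
  have hstep : (q : ℂ) ^ (-((n + 1 : ℕ)) : ℤ) * (q : ℂ) = (q : ℂ) ^ (-(n : ℤ)) := by
    rw [show (-((n + 1 : ℕ)) : ℤ) = -(n : ℤ) - 1 by push_cast; ring, zpow_sub₀ hQ, zpow_one]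
    field_simp
  have hun1 : (q : ℂ) ^ (-((n + 1 : ℕ)) : ℤ) = (q : ℂ) ^ (-(n : ℤ)) / (q : ℂ) := by
    rw [eq_div_iff hQ]; exact hstep
  have hpoch : qPoch (q : ℂ) ((q : ℂ) ^ (-((n + 1 : ℕ)) : ℤ)) (k + 1)
      = (1 - (q : ℂ) ^ (-((n + 1 : ℕ)) : ℤ)) * qPoch (q : ℂ) ((q : ℂ) ^ (-(n : ℤ))) k := by
    rw [qPoch_succ', hstep]
  have ha : qPoch (q : ℂ) ((q : ℂ) ^ (-(n : ℤ))) (k + 1)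
      = qPoch (q : ℂ) ((q : ℂ) ^ (-(n : ℤ))) k * (1 - (q : ℂ) ^ (-(n : ℤ)) * (q : ℂ) ^ k) :=
    qPoch_succ _ _ _
  have hqq : qPoch (q : ℂ) (q : ℂ) (k + 1)
      = qPoch (q : ℂ) (q : ℂ) k * (1 - (q : ℂ) ^ (k + 1)) := by
    rw [qPoch_succ, pow_succ']
  unfold Acoef
  rw [hpoch, ha, hqq, hun1]
  set u : ℂ := (q : ℂ) ^ (-(n : ℤ)) with hu
  have hune : u ≠ 0 := zpow_ne_zero _ hQ
  have hqqk : qPoch (q : ℂ) (q : ℂ) k ≠ 0 := qPoch_qq_ne_zero q hq0 hq1 k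
  have h1q : (1 : ℂ) - (q : ℂ) ^ (k + 1) ≠ 0 := one_sub_qpow_ne_zero q hq0 hq1 k
  have hQk : (q : ℂ) ^ k ≠ 0 := pow_ne_zero k hQ
  field_simp
  ring

/-- Key polynomial identity: the denominator-cleared q-Chu–Vandermonde sum. -/
lemma key_identity (q : ℝ) (hq0 : 0 < q) (hq1 : q < 1) :
    ∀ (n : ℕ) (x y : ℂ),
      ∑ k ∈ Finset.range (n + 1),
          Acoef q n k * qPoch (q : ℂ) x k * qPoch (q : ℂ) (y * (q : ℂ) ^ k) (n - k)
        = cauchyP (q : ℂ) x y n := by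
  intro n
  induction n with
  | zero =>
      intro x y
      simp [Acoef, qPoch, cauchyP]
  | succ n ih =>
      intro x y
      have hQ : (q : ℂ) ≠ 0 := qc_ne_zero q hq0
      -- RHS factorization
      have hrhs : cauchyP (q : ℂ) x y (n + 1) = (x - y) * cauchyP (q : ℂ) x ((q : ℂ) * y) n := by
        unfold cauchyP
        rw [Finset.prod_range_succ']
        simp only [pow_zero, one_mul]
        rw [mul_comm]
        congr 1
        apply Finset.prod_congr rfl
        intro k _
        rw [pow_succ']
        ring
      rw [hrhs, ← ih x ((q : ℂ) * y), Finset.mul_sum]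
      -- abbreviations
      set G : ℕ → ℂ := fun k =>
        Acoef q n k / (q : ℂ) ^ k * qPoch (q : ℂ) x k *
          qPoch (q : ℂ) (y * (q : ℂ) ^ k) (n + 1 - k) with hG
      set H : ℕ → ℂ := fun k =>
        Acoef q n k / (q : ℂ) ^ k * qPoch (q : ℂ) x (k + 1) *
          qPoch (q : ℂ) (y * (q : ℂ) ^ (k + 1)) (n - k) with hH
      rw [Finset.sum_range_succ']
      have hF0 : Acoef q (n + 1) 0 * qPoch (q : ℂ) x 0 *
          qPoch (q : ℂ) (y * (q : ℂ) ^ 0) (n + 1 - 0) = G 0 := by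
        simp [hG, Acoef_zero, Acoef, qPoch_zero]
      have hFsucc : ∀ k, Acoef q (n + 1) (k + 1) * qPoch (q : ℂ) x (k + 1) *
          qPoch (q : ℂ) (y * (q : ℂ) ^ (k + 1)) (n + 1 - (k + 1)) = G (k + 1) - H k := by
        intro k
        rw [Acoef_rec q hq0 hq1 n k]
        simp only [hG, hH, Nat.succ_sub_succ]
        ring
      have hGH : ∀ k ∈ Finset.range (n + 1),
          (x - y) * (Acoef q n k * qPoch (q : ℂ) x k *
            qPoch (q : ℂ) ((q : ℂ) * y * (q : ℂ) ^ k) (n - k)) = G k - H k := by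
        intro k hk
        have hkn : k ≤ n := Nat.lt_succ_iff.mp (Finset.mem_range.mp hk)
        have hsub : n + 1 - k = (n - k) + 1 := by omega
        have hyq : y * (q : ℂ) ^ k * (q : ℂ) = (q : ℂ) * y * (q : ℂ) ^ k := by ring
        have hyq2 : y * (q : ℂ) ^ (k + 1) = (q : ℂ) * y * (q : ℂ) ^ k := by
          rw [pow_succ']; ring
        simp only [hG, hH, hsub, qPoch_succ' (q : ℂ) (y * (q : ℂ) ^ k) (n - k), hyq, hyq2,
          qPoch_succ (q : ℂ) x k]
        have hQk : (q : ℂ) ^ k ≠ 0 := pow_ne_zero k hQ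
        field_simp
        ring
      rw [Finset.sum_congr rfl (fun k _ => hFsucc k), hF0, Finset.sum_sub_distrib,
        Finset.sum_congr rfl hGH, Finset.sum_sub_distrib]
      have : ∑ k ∈ Finset.range (n + 1), G (k + 1) + G 0
          = ∑ k ∈ Finset.range (n + 1), G k + G (n + 1) := by
        rw [← Finset.sum_range_succ', Finset.sum_range_succ]
      have hGtop : G (n + 1) = 0 := by
        simp [hG, Acoef_top q hq0 n]
      rw [sub_add_eq_add_sub, this, hGtop]
      ring

theorem q_chu_vandermonde (q : ℝ) (hq0 : 0 < q) (hq1 : q < 1) (n : ℕ) (x y : ℂ)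
    (hy : qPoch (q : ℂ) y n ≠ 0) :
    ∑ k ∈ Finset.range (n + 1),
        qPoch (q : ℂ) ((q : ℂ) ^ (-(n : ℤ))) k * qPoch (q : ℂ) x k /
          (qPoch (q : ℂ) (q : ℂ) k * qPoch (q : ℂ) y k) * (q : ℂ) ^ k
      = cauchyP (q : ℂ) x y n / qPoch (q : ℂ) y n := by
  rw [← key_identity q hq0 hq1 n x y, Finset.sum_div]
  apply Finset.sum_congr rfl
  intro k hk
  have hkn : k ≤ n := Nat.lt_succ_iff.mp (Finset.mem_range.mp hk)
  have hsplit : qPoch (q : ℂ) y n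
      = qPoch (q : ℂ) y k * qPoch (q : ℂ) (y * (q : ℂ) ^ k) (n - k) := by
    rw [← qPoch_add (q : ℂ) y k (n - k), Nat.add_sub_cancel' hkn]
  have h1 : qPoch (q : ℂ) y k ≠ 0 := by
    intro h; apply hy; rw [hsplit, h, zero_mul]
  have h2 : qPoch (q : ℂ) (y * (q : ℂ) ^ k) (n - k) ≠ 0 := by
    intro h; apply hy; rw [hsplit, h, mul_zero]
  have h3 : qPoch (q : ℂ) (q : ℂ) k ≠ 0 := qPoch_qq_ne_zero q hq0 hq1 k
  rw [hsplit]
  unfold Acoef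
  have h2' : qPoch (q : ℂ) ((q : ℂ) ^ k * y) (n - k) ≠ 0 := by rw [mul_comm]; exact h2
  field_simp
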